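/- (Correctness of Rule 2, contradicting case.) Let S be a weighted system containing two equations with the same left-hand side α ⊆ {1,…,n} and contradicting right-hand sides: Σ_{i∈α} z_i = b with weight w' and Σ_{i∈α} z_i = b+1 with weight w'', where w' ≥ w''. Let T be obtained from S by replacing this pair by the single equation Σ_{i∈α} z_i = b with weight w' − w'' (deleting it if w' = w''), and let W_T = W − 2w''. Then for every assignment z, sat_S(z) = sat_T(z) + w''; consequently, for every integer k, there exists z with 2·sat_S(z) ≥ W + k if and only if there exists z with 2·sat_T(z) ≥ W_T + k. -/
import Mathlib


/-- Correctness of Rule 2, contradicting case: the system `S`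
consists of the common equations `(α j, b j, w j)` together with the pair
`∑ i ∈ α₀, z i = b₀` of weight `w'` and `∑ i ∈ α₀, z i = b₀ + 1` of weight `w''`,
with `w' ≥ w''`; the system `T` replaces the pair by the single equation
`∑ i ∈ α₀, z i = b₀` of weight `w' - w''` (deleted when `w' = w''`).  Then
`sat_S(z) = sat_T(z) + w''` for every `z`, and for every integer `k` there is
`z` with `2·sat_S(z) ≥ W_S + k` iff there is `z` with `2·sat_T(z) ≥ W_T + k`,
where `W_T = W_S - 2 w''`. -/
theorem maxlin2_rule2_contradicting_correct
    (n m : ℕ) (α : Fin m → Finset (Fin n)) (hα : ∀ j, (α j).Nonempty)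
    (b : Fin m → ZMod 2) (w : Fin m → ℕ) (hw : ∀ j, 0 < w j)
    (α₀ : Finset (Fin n)) (hα₀ : α₀.Nonempty) (b₀ : ZMod 2)
    (w' w'' : ℕ) (hw'' : 0 < w'') (hww : w'' ≤ w')
    (satS satT : (Fin n → ZMod 2) → ℕ)
    (hsatS : ∀ z, satS z =
      (∑ j ∈ Finset.univ.filter (fun j => ∑ i ∈ α j, z i = b j), w j) +
        (if ∑ i ∈ α₀, z i = b₀ then w' else w''))
    (hsatT : ∀ z, satT z =
      (∑ j ∈ Finset.univ.filter (fun j => ∑ i ∈ α j, z i = b j), w j) +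
        (if ∑ i ∈ α₀, z i = b₀ then w' - w'' else 0))
    (WS WT : ℕ)
    (hWS : WS = (∑ j, w j) + w' + w'')
    (hWT : WT = (∑ j, w j) + (w' - w'')) :
    (∀ z, satS z = satT z + w'') ∧
      ∀ k : ℤ, (∃ z, (WS : ℤ) + k ≤ 2 * satS z) ↔
        (∃ z, (WT : ℤ) + k ≤ 2 * satT z) := by
  have key : ∀ z, satS z = satT z + w'' := by
    intro z
    rw [hsatS, hsatT]
    split <;> omega
  refine ⟨key, fun k => ?_⟩
  have hW : (WS : ℤ) = WT + 2 * w'' := by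
    have : (WS : ℕ) = WT + 2 * w'' := by omega
    exact_mod_cast this
  constructor <;> rintro ⟨z, hz⟩ <;> exact ⟨z, by have := key z; omega⟩
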